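/- The 4-dimensional complex algebra d₈₇ with basis e₁, e₂, e₃, e₄ and nonzero products e₁·e₃ = e₂, e₃·e₁ = -e₂ is associative and nilpotent, its kernel {x : xA = Ax = 0} is the 2-dimensional subspace spanned by e₂ and e₄, and its product satisfies A³ = 0. -/
import Mathlib


/-- The multiplication of the algebra `d₈₇` on `ℂ⁴` with basis `e₁,…,e₄`:
`e₁e₃ = e₂`, `e₃e₁ = -e₂`, all other basis products zero (0-indexed components). -/
def mul87 (x y : Fin 4 → ℂ) : Fin 4 → ℂ :=
  ![0, x 0 * y 2 - x 2 * y 0, 0, 0]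

lemma mul87_left (x y z : Fin 4 → ℂ) : mul87 (mul87 x y) z = 0 := by
  funext i
  fin_cases i <;> simp [mul87]

lemma mul87_right (x y z : Fin 4 → ℂ) : mul87 x (mul87 y z) = 0 := by
  funext i
  fin_cases i <;> simp [mul87]

lemma indep2 : LinearIndependent ℂ ![(![0, 1, 0, 0] : Fin 4 → ℂ), ![0, 0, 0, 1]] := by
  rw [LinearIndependent.pair_iff]
  intro s t h
  have h1 := congrFun h 1
  have h3 := congrFun h 3
  simp at h1 h3
  exact ⟨h1, h3⟩

theorem d87_properties :
    (∀ x y z : Fin 4 → ℂ, mul87 (mul87 x y) z = mul87 x (mul87 y z)) ∧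
    (∃ n : ℕ, 1 ≤ n ∧ ∀ (x : Fin 4 → ℂ) (l : List (Fin 4 → ℂ)),
      l.length + 1 = n → l.foldl mul87 x = 0) ∧
    ({x : Fin 4 → ℂ | ∀ a : Fin 4 → ℂ, mul87 x a = 0 ∧ mul87 a x = 0} =
      (Submodule.span ℂ {(![0, 1, 0, 0] : Fin 4 → ℂ), ![0, 0, 0, 1]} : Set (Fin 4 → ℂ))) ∧
    Module.finrank ℂ
      (Submodule.span ℂ {(![0, 1, 0, 0] : Fin 4 → ℂ), ![0, 0, 0, 1]}) = 2 ∧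
    (∀ x y z : Fin 4 → ℂ, mul87 (mul87 x y) z = 0 ∧ mul87 x (mul87 y z) = 0) := by
  refine ⟨fun x y z => by rw [mul87_left, mul87_right], ⟨3, by norm_num, ?_⟩, ?_, ?_,
    fun x y z => ⟨mul87_left x y z, mul87_right x y z⟩⟩
  · rintro x (_ | ⟨y, _ | ⟨z, _ | l⟩⟩) h <;> simp at h
    exact mul87_left x y z
  · ext x
    simp only [Set.mem_setOf_eq, SetLike.mem_coe]
    constructor
    · intro h
      have h1 := congrFun (h ![0, 0, 1, 0]).1 1
      have h2 := congrFun (h ![1, 0, 0, 0]).1 1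
      simp [mul87] at h1 h2
      rw [Submodule.mem_span_pair]
      refine ⟨x 1, x 3, ?_⟩
      funext i
      fin_cases i <;> simp [h1, h2]
    · intro hx
      rw [Submodule.mem_span_pair] at hx
      obtain ⟨a, b, rfl⟩ := hx
      intro c
      constructor <;> · funext i; fin_cases i <;> simp [mul87]
  · have h := finrank_span_eq_card (R := ℂ) indep2
    rw [show Set.range ![(![0, 1, 0, 0] : Fin 4 → ℂ), ![0, 0, 0, 1]] =
      {(![0, 1, 0, 0] : Fin 4 → ℂ), ![0, 0, 0, 1]} by
        simp [Matrix.range_cons, Set.pair_comm]] at h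
    simpa using h
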